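/- Let Poset_mono be the category of finite posets and injective order-preserving maps, let Ω_n be the n-element linear order, and let 𝔓 assign to each span L ←g— Ω_n —h→ R of injective monotone maps the pushout of that span computed in the category of posets and all monotone maps, together with its two (necessarily injective) structure maps. Then (Poset_mono, Ω, 𝔓) is a spined category, and it admits no S-functor: there is no spinal functor from it to Nat. -/

import Mathlib

open CategoryTheory

universe u v

/-- The data of a spine and proxy pushout operation on a category. -/
structure SpineData (C : Type u) [Category.{v} C] where
  /-- the spine, a functor from the discrete category ℕ -/
  Ω : ℕ → C
  /-- proxy pushout object of a span out of a spine object -/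
  P : ∀ {n : ℕ} {G H : C}, (Ω n ⟶ G) → (Ω n ⟶ H) → C
  /-- left structure morphism of the proxy pushout cocone -/
  inl : ∀ {n : ℕ} {G H : C} (g : Ω n ⟶ G) (h : Ω n ⟶ H), G ⟶ P g h
  /-- right structure morphism of the proxy pushout cocone -/
  inr : ∀ {n : ℕ} {G H : C} (g : Ω n ⟶ G) (h : Ω n ⟶ H), H ⟶ P g h

variable {C : Type u} [Category.{v} C]

/-- (SC1): every object admits a morphism to some spine object. -/
def SpineData.SC1 (D : SpineData C) : Prop :=
  ∀ X : C, ∃ n : ℕ, Nonempty (X ⟶ D.Ω n)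

/-- (SC2): unique compatibility morphisms between proxy pushouts of extended spans. -/
def SpineData.SC2 (D : SpineData C) : Prop :=
  ∀ {n : ℕ} {G H G' H' : C} (g : D.Ω n ⟶ G) (h : D.Ω n ⟶ H) (g' : G ⟶ G') (h' : H ⟶ H'),
    ∃! m : D.P g h ⟶ D.P (g ≫ g') (h ≫ h'),
      D.inl g h ≫ m = g' ≫ D.inl (g ≫ g') (h ≫ h') ∧
      D.inr g h ≫ m = h' ≫ D.inr (g ≫ g') (h ≫ h')

/-- A spined category is a category equipped with spine data satisfying SC1 and SC2. -/
def SpineData.IsSpined (D : SpineData C) : Prop := D.SC1 ∧ D.SC2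

/-- An S-functor over a spined category `(C, Ω, 𝔓)`: a spinal functor to the spined
category `Nat` (the poset `(ℕ, ≤)` with spine `n ↦ n` and proxy pushouts given by maxima).
Equivalently: a monotone map preserving the spine and proxy pushouts. -/
structure SFunctor (D : SpineData C) where
  val : C → ℕ
  mono : ∀ {X Y : C}, (X ⟶ Y) → val X ≤ val Y
  spine : ∀ n : ℕ, val (D.Ω n) = n
  pp : ∀ {n : ℕ} {G H : C} (g : D.Ω n ⟶ G) (h : D.Ω n ⟶ H),
    val (D.P g h) = max (val G) (val H)

/-- An object is pseudo-chordal if all S-functors agree on it. -/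
def PseudoChordal (D : SpineData C) (X : C) : Prop :=
  ∀ F G : SFunctor D, F.val X = G.val X

/-- The chordal objects: the smallest collection of objects containing the spine and
closed under proxy pushouts. -/
inductive Chordal (D : SpineData C) : C → Prop
  | spine (n : ℕ) : Chordal D (D.Ω n)
  | push {n : ℕ} {A B : C} (a : D.Ω n ⟶ A) (b : D.Ω n ⟶ B) :
      Chordal D A → Chordal D B → Chordal D (D.P a b)

/-- The set of widths of pseudo-chordal completions of `X`: `k` is such a width
iff there is a morphism `X ⟶ H` with `H` pseudo-chordal and every S-functor takes
the value `k` on `H`. -/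
def pcWidths (D : SpineData C) (X : C) : Set ℕ :=
  {k | ∃ H : C, Nonempty (X ⟶ H) ∧ PseudoChordal D H ∧ ∀ F : SFunctor D, F.val H = k}

/-- The set of widths of chordal completions of `X`. -/
def chWidths (D : SpineData C) (X : C) : Set ℕ :=
  {k | ∃ H : C, Nonempty (X ⟶ H) ∧ Chordal D H ∧ ∀ F : SFunctor D, F.val H = k}

/-- The triangulation number: minimum width of a pseudo-chordal completion. -/
noncomputable def tri (D : SpineData C) (X : C) : ℕ := sInf (pcWidths D X)

/-- The chordal triangulation number: minimum width of a chordal completion. -/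
noncomputable def triCh (D : SpineData C) (X : C) : ℕ := sInf (chWidths D X)

/-- The order of an object: least `n` admitting a morphism `X ⟶ Ω n`. -/
noncomputable def ordOf (D : SpineData C) (X : C) : ℕ := sInf {n : ℕ | Nonempty (X ⟶ D.Ω n)}

/-- A finite poset. -/
structure FinPoset : Type 1 where
  V : Type
  [fin : Finite V]
  [ord : PartialOrder V]

attribute [instance] FinPoset.fin FinPoset.ord

/-- `Poset_mono`: the category of finite posets and injective order-preserving maps. -/
instance : Category.{0, 1} FinPoset where
  Hom A B := {f : A.V → B.V // Function.Injective f ∧ Monotone f}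
  id A := ⟨id, fun _ _ e => e, monotone_id⟩
  comp f g := ⟨g.1 ∘ f.1, fun _ _ e => f.2.1 (g.2.1 e), g.2.2.comp f.2.2⟩

/-- The `n`-element linear order, as a finite poset. -/
def linOrd (n : ℕ) : FinPoset := ⟨Fin n⟩

section GlueAux

variable {α β γ : Type} [PartialOrder α] [PartialOrder β] [PartialOrder γ]

/-- The order relation on a disjoint sum used to glue two posets along a linear order. -/
def glueLE (u : α → β) (v : α → γ) : β ⊕ γ → β ⊕ γ → Prop
  | .inl b, .inl b' => b ≤ b'
  | .inl b, .inr c => ∃ x, b ≤ u x ∧ v x ≤ c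
  | .inr c, .inl b => ∃ x, c ≤ v x ∧ u x ≤ b
  | .inr c, .inr c' => c ≤ c'

/-- Carrier of the glued poset. -/
def GlueT (β : Type) {α γ : Type} (v : α → γ) : Type :=
  β ⊕ {c : γ // ¬ ∃ x, v x = c}

/-- Inclusion of the glued carrier into the full sum. -/
def glueι {v : α → γ} : GlueT β v → β ⊕ γ := Sum.map id Subtype.val

instance {v : α → γ} [Finite β] [Finite γ] : Finite (GlueT β v) :=
  inferInstanceAs (Finite (β ⊕ {c : γ // ¬ ∃ x, v x = c}))

/-- The glued partial order. -/
def gluePO (u : α → β) (v : α → γ) (hu : Function.Injective u)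
    (hv : Function.Injective v)
    (mu : Monotone u) (mv : Monotone v) (tot : ∀ x y : α, x ≤ y ∨ y ≤ x) :
    PartialOrder (GlueT β v) where
  le z z' := glueLE u v (glueι z) (glueι z')
  lt z z' := glueLE u v (glueι z) (glueι z') ∧ ¬ glueLE u v (glueι z') (glueι z)
  lt_iff_le_not_ge _ _ := Iff.rfl
  le_refl z := by
    rcases z with b | c <;> exact le_refl _
  le_trans z₁ z₂ z₃ h1 h2 := by
    rcases z₁ with b | ⟨c, hc⟩ <;> rcases z₂ with b' | ⟨c', hc'⟩ <;>
      rcases z₃ with b'' | ⟨c'', hc''⟩ <;>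
      simp only [glueLE, glueι, Sum.map, id] at h1 h2 ⊢
    · exact le_trans h1 h2
    · obtain ⟨x, hx1, hx2⟩ := h2; exact ⟨x, h1.trans hx1, hx2⟩
    · obtain ⟨x, hx1, hx2⟩ := h1
      obtain ⟨y, hy1, hy2⟩ := h2
      rcases tot x y with hxy | hyx
      · exact (hx1.trans (mu hxy)).trans hy2
      · have hvv : v x = v y := le_antisymm (hx2.trans hy1) (mv hyx)
        cases hv hvv
        exact hx1.trans hy2
    · obtain ⟨x, hx1, hx2⟩ := h1; exact ⟨x, hx1, hx2.trans h2⟩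
    · obtain ⟨x, hx1, hx2⟩ := h1; exact ⟨x, hx1, hx2.trans h2⟩
    · obtain ⟨x, hx1, hx2⟩ := h1
      obtain ⟨y, hy1, hy2⟩ := h2
      rcases tot x y with hxy | hyx
      · exact (hx1.trans (mv hxy)).trans hy2
      · have huu : u x = u y := le_antisymm (hx2.trans hy1) (mu hyx)
        cases hu huu
        exact hx1.trans hy2
    · obtain ⟨y, hy1, hy2⟩ := h2; exact ⟨y, h1.trans hy1, hy2⟩
    · exact le_trans h1 h2
  le_antisymm z₁ z₂ h1 h2 := by
    rcases z₁ with b | ⟨c, hc⟩ <;> rcases z₂ with b' | ⟨c', hc'⟩ <;>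
      simp only [glueLE, glueι, Sum.map, id] at h1 h2 ⊢
    · exact congrArg Sum.inl (le_antisymm h1 h2)
    · exfalso
      obtain ⟨x, hx1, hx2⟩ := h1
      obtain ⟨y, hy1, hy2⟩ := h2
      rcases tot x y with hxy | hyx
      · have huu : u x = u y := le_antisymm (mu hxy) (hy2.trans hx1)
        cases hu huu
        exact hc' ⟨x, le_antisymm hx2 hy1⟩
      · have hvv : v x = v y := le_antisymm (hx2.trans hy1) (mv hyx)
        cases hv hvv
        exact hc' ⟨x, le_antisymm hx2 hy1⟩
    · exfalso
      obtain ⟨x, hx1, hx2⟩ := h1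
      obtain ⟨y, hy1, hy2⟩ := h2
      rcases tot x y with hxy | hyx
      · have hvv : v x = v y := le_antisymm (mv hxy) (hy2.trans hx1)
        cases hv hvv
        exact hc ⟨x, le_antisymm hy2 hx1⟩
      · have huu : u x = u y := le_antisymm (hx2.trans hy1) (mu hyx)
        cases hu huu
        exact hc ⟨x, le_antisymm hy2 hx1⟩
    · exact congrArg Sum.inr (Subtype.ext (le_antisymm h1 h2))

/-- A separating monotone cocone on any span of injective monotone maps out of a
linear order: the set-level pushout carries a partial order. -/
lemma glue_sep [Finite β] [Finite γ] (u : α → β) (v : α → γ)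
    (hu : Function.Injective u) (hv : Function.Injective v)
    (mu : Monotone u) (mv : Monotone v)
    (tot : ∀ x y : α, x ≤ y ∨ y ≤ x) :
    ∃ (Z : FinPoset) (z₁ : β → Z.V) (z₂ : γ → Z.V),
      Monotone z₁ ∧ Monotone z₂ ∧ z₁ ∘ u = z₂ ∘ v ∧
      ∀ b c, z₁ b = z₂ c → ∃ x, u x = b ∧ v x = c := by
  classical
  letI : PartialOrder (GlueT β v) := gluePO u v hu hv mu mv tot
  let Z : FinPoset := { V := GlueT β v }
  let z₂ : γ → GlueT β v := fun c =>
    if h : ∃ x, v x = c then Sum.inl (u h.choose) else Sum.inr ⟨c, h⟩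
  have hz₂r : ∀ x : α, z₂ (v x) = Sum.inl (u x) := by
    intro x
    have h : ∃ y, v y = v x := ⟨x, rfl⟩
    have hxc : h.choose = x := hv h.choose_spec
    simp only [z₂, dif_pos h, hxc]
    exact dif_pos h
  have hz₂n : ∀ c (hc : ¬ ∃ x, v x = c), z₂ c = Sum.inr ⟨c, hc⟩ := by
    intro c hc; simp only [z₂, dif_neg hc]
    exact dif_neg hc
  refine ⟨Z, Sum.inl, z₂, ?_, ?_, ?_, ?_⟩
  · intro a b hab; exact hab
  · intro c c' hcc'
    by_cases h : ∃ x, v x = c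
    · obtain ⟨x, rfl⟩ := h
      by_cases h' : ∃ y, v y = c'
      · obtain ⟨y, rfl⟩ := h'
        rw [hz₂r x, hz₂r y]
        rcases tot x y with hxy | hyx
        · exact mu hxy
        · have hvv : v x = v y := le_antisymm hcc' (mv hyx)
          cases hv hvv
          exact le_refl _
      · rw [hz₂r x, hz₂n c' h']
        exact ⟨x, le_rfl, hcc'⟩
    · by_cases h' : ∃ y, v y = c'
      · obtain ⟨y, rfl⟩ := h'
        rw [hz₂n c h, hz₂r y]
        exact ⟨y, hcc', le_rfl⟩
      · rw [hz₂n c h, hz₂n c' h']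
        exact hcc'
  · funext x
    exact (hz₂r x).symm
  · intro b c hbc
    by_cases h : ∃ x, v x = c
    · obtain ⟨x, rfl⟩ := h
      rw [hz₂r x] at hbc
      exact ⟨x, (Sum.inl.inj hbc).symm, rfl⟩
    · rw [hz₂n c h] at hbc
      simp at hbc

end GlueAux

/-- let `Ω n` be the `n`-element linear order and let `𝔓` assign to each
span of injective monotone maps out of `Ω n` its pushout computed in the category of
posets and all monotone maps (i.e. its cocone satisfies the pushout universal property
among all monotone cocones).  Then `(Poset_mono, Ω, 𝔓)` is a spined category that
admits no S-functor. -/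
theorem posetMono_spined_but_no_SFunctor (D : SpineData FinPoset)
    (hΩ : ∀ n : ℕ, D.Ω n = linOrd n)
    (hpush : ∀ {n : ℕ} {L R : FinPoset} (g : D.Ω n ⟶ L) (h : D.Ω n ⟶ R),
      ((D.inl g h).1 ∘ g.1 = (D.inr g h).1 ∘ h.1) ∧
      ∀ (Z : FinPoset) (z₁ : L.V → Z.V) (z₂ : R.V → Z.V),
        Monotone z₁ → Monotone z₂ → z₁ ∘ g.1 = z₂ ∘ h.1 →
        ∃! m : (D.P g h).V → Z.V,
          Monotone m ∧ m ∘ (D.inl g h).1 = z₁ ∧ m ∘ (D.inr g h).1 = z₂) :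
    D.IsSpined ∧ IsEmpty (SFunctor D) := by
  classical
  -- spine objects are linear
  have tot : ∀ n : ℕ, ∀ x y : (D.Ω n).V, x ≤ y ∨ y ≤ x := by
    intro n
    rw [hΩ n]
    show ∀ x y : Fin n, x ≤ y ∨ y ≤ x
    exact fun x y => le_total x y
  -- separation: elements identified in the pushout come from the span
  have sep : ∀ {n : ℕ} {L R : FinPoset} (g : D.Ω n ⟶ L) (h : D.Ω n ⟶ R) (a : L.V) (b : R.V),
      (D.inl g h).1 a = (D.inr g h).1 b → ∃ x, g.1 x = a ∧ h.1 x = b := by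
    intro n L R g h a b hab
    obtain ⟨Z, z₁, z₂, m1, m2, mc, msep⟩ :=
      glue_sep g.1 h.1 g.2.1 h.2.1 g.2.2 h.2.2 (tot n)
    obtain ⟨m, ⟨mm, me1, me2⟩, -⟩ := (hpush g h).2 Z z₁ z₂ m1 m2 mc
    refine msep a b ?_
    calc z₁ a = m ((D.inl g h).1 a) := (congrFun me1 a).symm
      _ = m ((D.inr g h).1 b) := congrArg m hab
      _ = z₂ b := congrFun me2 b
  -- joint surjectivity of the pushout cocone
  have surj : ∀ {n : ℕ} {L R : FinPoset} (g : D.Ω n ⟶ L) (h : D.Ω n ⟶ R)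
      (p : (D.P g h).V),
      (∃ l, (D.inl g h).1 l = p) ∨ (∃ r, (D.inr g h).1 r = p) := by
    intro n L R g h p
    set U : Set (D.P g h).V :=
      Set.range (D.inl g h).1 ∪ Set.range (D.inr g h).1 with hU
    let Z : FinPoset := { V := {q : (D.P g h).V // q ∈ U} }
    let z₁ : L.V → Z.V := fun l => ⟨(D.inl g h).1 l, Or.inl ⟨l, rfl⟩⟩
    let z₂ : R.V → Z.V := fun r => ⟨(D.inr g h).1 r, Or.inr ⟨r, rfl⟩⟩
    obtain ⟨m, ⟨mm, me1, me2⟩, -⟩ := (hpush g h).2 Z z₁ z₂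
      (fun a b hab => (D.inl g h).2.2 hab) (fun a b hab => (D.inr g h).2.2 hab)
      (by funext x; exact Subtype.ext (congrFun (hpush g h).1 x))
    obtain ⟨m₀, -, muniq⟩ := (hpush g h).2 (D.P g h) (D.inl g h).1 (D.inr g h).1
      (D.inl g h).2.2 (D.inr g h).2.2 (hpush g h).1
    have h1 : (fun q => (m q).1) = m₀ := by
      refine muniq _ ⟨fun a b hab => mm hab, ?_, ?_⟩
      · funext l; exact congrArg Subtype.val (congrFun me1 l)
      · funext r; exact congrArg Subtype.val (congrFun me2 r)
    have h2 : (id : (D.P g h).V → (D.P g h).V) = m₀ :=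
      muniq _ ⟨monotone_id, rfl, rfl⟩
    have hp : (m p).1 = p := congrFun (h1.trans h2.symm) p
    have hmem := (m p).2
    rw [hp] at hmem
    rcases hmem with ⟨l, hl⟩ | ⟨r, hr⟩
    · exact Or.inl ⟨l, hl⟩
    · exact Or.inr ⟨r, hr⟩
  -- SC2
  have sc2 : D.SC2 := by
    intro n G H G' H' g h g' h'
    obtain ⟨m₀, ⟨mm, me1, me2⟩, muniq⟩ := (hpush g h).2 (D.P (g ≫ g') (h ≫ h'))
      ((D.inl (g ≫ g') (h ≫ h')).1 ∘ g'.1) ((D.inr (g ≫ g') (h ≫ h')).1 ∘ h'.1)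
      ((D.inl (g ≫ g') (h ≫ h')).2.2.comp g'.2.2)
      ((D.inr (g ≫ g') (h ≫ h')).2.2.comp h'.2.2)
      ((hpush (g ≫ g') (h ≫ h')).1)
    have me1' : ∀ l, m₀ ((D.inl g h).1 l) = (D.inl (g ≫ g') (h ≫ h')).1 (g'.1 l) :=
      fun l => congrFun me1 l
    have me2' : ∀ r, m₀ ((D.inr g h).1 r) = (D.inr (g ≫ g') (h ≫ h')).1 (h'.1 r) :=
      fun r => congrFun me2 r
    have minj : Function.Injective m₀ := by
      intro p q hpq
      rcases surj g h p with ⟨l, rfl⟩ | ⟨r, rfl⟩ <;>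
        rcases surj g h q with ⟨l', rfl⟩ | ⟨r', rfl⟩
      · rw [me1' l, me1' l'] at hpq
        have := g'.2.1 ((D.inl (g ≫ g') (h ≫ h')).2.1 hpq)
        rw [this]
      · rw [me1' l, me2' r'] at hpq
        obtain ⟨x, hx1, hx2⟩ := sep (g ≫ g') (h ≫ h') _ _ hpq
        have hgl : g.1 x = l := g'.2.1 hx1
        have hhr : h.1 x = r' := h'.2.1 hx2
        rw [← hgl, ← hhr]
        exact congrFun (hpush g h).1 x
      · rw [me2' r, me1' l'] at hpq
        obtain ⟨x, hx1, hx2⟩ := sep (g ≫ g') (h ≫ h') _ _ hpq.symm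
        have hgl : g.1 x = l' := g'.2.1 hx1
        have hhr : h.1 x = r := h'.2.1 hx2
        rw [← hgl, ← hhr]
        exact (congrFun (hpush g h).1 x).symm
      · rw [me2' r, me2' r'] at hpq
        have := h'.2.1 ((D.inr (g ≫ g') (h ≫ h')).2.1 hpq)
        rw [this]
    refine ⟨⟨m₀, minj, mm⟩, ⟨Subtype.ext me1, Subtype.ext me2⟩, ?_⟩
    intro m' hm'
    obtain ⟨c1, c2⟩ := hm'
    exact Subtype.ext
      (muniq m'.1 ⟨m'.2.2, congrArg Subtype.val c1, congrArg Subtype.val c2⟩)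
  -- SC1
  have sc1 : D.SC1 := by
    intro X
    letI : Fintype X.V := Fintype.ofFinite _
    haveI : Finite (LinearExtension X.V) := inferInstanceAs (Finite X.V)
    letI : Fintype (LinearExtension X.V) := Fintype.ofFinite _
    refine ⟨Fintype.card (LinearExtension X.V), ?_⟩
    rw [hΩ _]
    let e := (monoEquivOfFin (LinearExtension X.V) rfl).symm
    refine ⟨⟨fun x => e (toLinearExtension x), ?_, ?_⟩⟩
    · intro a b hab
      have hinj : toLinearExtension (α := X.V) a = toLinearExtension b := e.injective hab
      exact hinj
    · intro a b hab
      exact e.monotone (toLinearExtension.monotone hab)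
  -- no S-functor
  have noF : IsEmpty (SFunctor D) := by
    constructor
    intro F
    obtain ⟨pt⟩ : Nonempty (D.Ω 1).V := by rw [hΩ 1]; exact ⟨(0 : Fin 1)⟩
    have hsub : ∀ x y : (D.Ω 1).V, x = y := by
      rw [hΩ 1]
      show ∀ x y : Fin 1, x = y
      exact fun x y => Subsingleton.elim x y
    obtain ⟨a0, a1, ha01, hane⟩ : ∃ a0 a1 : (D.Ω 2).V, a0 ≤ a1 ∧ a0 ≠ a1 := by
      rw [hΩ 2]
      show ∃ a0 a1 : Fin 2, a0 ≤ a1 ∧ a0 ≠ a1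
      exact ⟨0, 1, by decide, by decide⟩
    obtain ⟨b0, b1, b2, hb01, hb12, hb01ne, hb12ne, hb02ne, hball⟩ :
        ∃ b0 b1 b2 : (D.Ω 3).V, b0 ≤ b1 ∧ b1 ≤ b2 ∧ b0 ≠ b1 ∧ b1 ≠ b2 ∧ b0 ≠ b2 ∧
          ∀ x, x = b0 ∨ x = b1 ∨ x = b2 := by
      rw [hΩ 3]
      show ∃ b0 b1 b2 : Fin 3, b0 ≤ b1 ∧ b1 ≤ b2 ∧ b0 ≠ b1 ∧ b1 ≠ b2 ∧ b0 ≠ b2 ∧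
          ∀ x, x = b0 ∨ x = b1 ∨ x = b2
      exact ⟨0, 1, 2, by decide, by decide, by decide, by decide, by decide, by decide⟩
    let g : D.Ω 1 ⟶ D.Ω 2 := ⟨fun _ => a1, fun x y _ => hsub x y, monotone_const⟩
    let h : D.Ω 1 ⟶ D.Ω 2 := ⟨fun _ => a0, fun x y _ => hsub x y, monotone_const⟩
    have key : (D.inl g h).1 a1 = (D.inr g h).1 a0 := congrFun (hpush g h).1 pt
    -- order relations in the pushout
    have r01 : (D.inl g h).1 a0 ≤ (D.inl g h).1 a1 := (D.inl g h).2.2 ha01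
    have r1t : (D.inl g h).1 a1 ≤ (D.inr g h).1 a1 := by
      rw [key]; exact (D.inr g h).2.2 ha01
    have r0t : (D.inl g h).1 a0 ≤ (D.inr g h).1 a1 := r01.trans r1t
    -- distinctness
    have d01 : (D.inl g h).1 a0 ≠ (D.inl g h).1 a1 := fun e => hane ((D.inl g h).2.1 e)
    have d1t : (D.inl g h).1 a1 ≠ (D.inr g h).1 a1 := by
      rw [key]; exact fun e => hane ((D.inr g h).2.1 e)
    have d0t : (D.inl g h).1 a0 ≠ (D.inr g h).1 a1 := by
      intro e
      obtain ⟨x, hgx, -⟩ := sep g h _ _ e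
      exact hane hgx.symm
    -- the three-chain embeds into the pushout
    have hnb10 : ¬ b1 ≤ b0 := fun e => hb01ne (le_antisymm hb01 e)
    have hnb20 : ¬ b2 ≤ b0 := fun e => hb02ne (le_antisymm (hb01.trans hb12) e)
    have hnb21 : ¬ b2 ≤ b1 := fun e => hb12ne (le_antisymm hb12 e)
    let f : (D.Ω 3).V → (D.P g h).V := fun x =>
      if x ≤ b0 then (D.inl g h).1 a0 else if x ≤ b1 then (D.inl g h).1 a1
      else (D.inr g h).1 a1
    have vb0 : f b0 = (D.inl g h).1 a0 := if_pos le_rfl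
    have vb1 : f b1 = (D.inl g h).1 a1 := (if_neg hnb10).trans (if_pos le_rfl)
    have vb2 : f b2 = (D.inr g h).1 a1 := (if_neg hnb20).trans (if_neg hnb21)
    have fmono : Monotone f := by
      intro x y hxy
      by_cases hx0 : x ≤ b0
      · have ex : f x = (D.inl g h).1 a0 := if_pos hx0
        rw [ex]
        by_cases hy0 : y ≤ b0
        · have ey : f y = (D.inl g h).1 a0 := if_pos hy0
          rw [ey]
        · by_cases hy1 : y ≤ b1
          · have ey : f y = (D.inl g h).1 a1 := (if_neg hy0).trans (if_pos hy1)
            rw [ey]; exact r01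
          · have ey : f y = (D.inr g h).1 a1 := (if_neg hy0).trans (if_neg hy1)
            rw [ey]; exact r0t
      · have hy0 : ¬ y ≤ b0 := fun e => hx0 (hxy.trans e)
        by_cases hx1 : x ≤ b1
        · have ex : f x = (D.inl g h).1 a1 := (if_neg hx0).trans (if_pos hx1)
          rw [ex]
          by_cases hy1 : y ≤ b1
          · have ey : f y = (D.inl g h).1 a1 := (if_neg hy0).trans (if_pos hy1)
            rw [ey]
          · have ey : f y = (D.inr g h).1 a1 := (if_neg hy0).trans (if_neg hy1)
            rw [ey]; exact r1t
        · have hy1 : ¬ y ≤ b1 := fun e => hx1 (hxy.trans e)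
          have ex : f x = (D.inr g h).1 a1 := (if_neg hx0).trans (if_neg hx1)
          have ey : f y = (D.inr g h).1 a1 := (if_neg hy0).trans (if_neg hy1)
          rw [ex, ey]
    have finj : Function.Injective f := by
      intro x y hxy
      rcases hball x with rfl | rfl | rfl <;> rcases hball y with rfl | rfl | rfl
      · rfl
      · rw [vb0, vb1] at hxy; exact absurd hxy d01
      · rw [vb0, vb2] at hxy; exact absurd hxy d0t
      · rw [vb1, vb0] at hxy; exact absurd hxy.symm d01
      · rfl
      · rw [vb1, vb2] at hxy; exact absurd hxy d1t
      · rw [vb2, vb0] at hxy; exact absurd hxy.symm d0t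
      · rw [vb2, vb1] at hxy; exact absurd hxy.symm d1t
      · rfl
    have t : D.Ω 3 ⟶ D.P g h := ⟨f, finj, fmono⟩
    have hle : F.val (D.Ω 3) ≤ F.val (D.P g h) := F.mono t
    rw [F.spine 3, F.pp g h, F.spine 2] at hle
    omega
  exact ⟨⟨sc1, sc2⟩, noF⟩
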